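/- arXiv:1109.3083 — 3 statements merged into one kernel-verified Lean document; each statement's English description precedes it below -/
import Mathlib

section
/- Let T be a Hom-finite triangulated category (over a field k) and let f : A → B be a morphism in T. Then the cone of f is isomorphic to A[1] ⊕ B if and only if f = 0. -/
open CategoryTheory Limits Pretriangulated

section Aux

variable {k : Type*} [Field k] {T : Type*} [Category T] [Preadditive T]
    [CategoryTheory.Linear k T]

/-- Hom into a biproduct is linearly equivalent to the product of Homs. -/
noncomputable def homBiprodEquiv (A X Y : T) [HasBinaryBiproduct X Y] :
    (A ⟶ X ⊞ Y) ≃ₗ[k] (A ⟶ X) × (A ⟶ Y) where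
  toFun u := (u ≫ biprod.fst, u ≫ biprod.snd)
  invFun p := biprod.lift p.1 p.2
  map_add' u v := by simp [Preadditive.add_comp]
  map_smul' c u := by simp [CategoryTheory.Linear.smul_comp]
  left_inv u := by ext <;> simp
  right_inv p := by simp

end Aux

/-- In a Hom-finite (over a field `k`) triangulated category `T`,
the cone of a morphism `f : A ⟶ B` is isomorphic to `A⟦1⟧ ⊕ B` iff `f = 0`. -/
theorem stmt0 {k : Type*} [Field k] {T : Type*} [Category T] [Preadditive T]
    [CategoryTheory.Linear k T] [HasZeroObject T] [HasShift T ℤ]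
    [∀ n : ℤ, (shiftFunctor T n).Additive] [Pretriangulated T] [HasBinaryBiproducts T]
    (homFinite : ∀ X Y : T, FiniteDimensional k (X ⟶ Y))
    {A B C : T} (f : A ⟶ B) (g : B ⟶ C) (h : C ⟶ A⟦(1 : ℤ)⟧)
    (hT : Triangle.mk f g h ∈ distTriang T) :
    Nonempty (C ≅ (A⟦(1 : ℤ)⟧) ⊞ B) ↔ f = 0 := by
  have := homFinite
  constructor
  · rintro ⟨e⟩
    -- linear maps given by postcomposition
    set L1 : (A ⟶ B) →ₗ[k] (A ⟶ C) := Linear.rightComp k A g with hL1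
    set L2 : (A ⟶ C) →ₗ[k] (A ⟶ A⟦(1 : ℤ)⟧) := Linear.rightComp k A h with hL2
    -- exactness at Hom(A, C)
    have hker : LinearMap.ker L2 = LinearMap.range L1 := by
      apply le_antisymm
      · intro u hu
        obtain ⟨v, hv⟩ := Triangle.coyoneda_exact₃ _ hT u hu
        exact ⟨v, hv.symm⟩
      · rintro _ ⟨v, rfl⟩
        have : g ≫ h = 0 := comp_distTriang_mor_zero₂₃ _ hT
        simp only [LinearMap.mem_ker, hL1, hL2, Linear.rightComp_apply,
          Category.assoc, this, Limits.comp_zero]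
    -- dimension count
    have hdim : Module.finrank k (A ⟶ C) =
        Module.finrank k (A ⟶ A⟦(1 : ℤ)⟧) + Module.finrank k (A ⟶ B) := by
      rw [LinearEquiv.finrank_eq ((Linear.homCongr k (Iso.refl A) e).trans
        (homBiprodEquiv A (A⟦(1 : ℤ)⟧) B))]
      simp [Module.finrank_prod]
    have hrn1 := LinearMap.finrank_range_add_finrank_ker L1
    have hrn2 := LinearMap.finrank_range_add_finrank_ker L2
    have hle2 : Module.finrank k (LinearMap.range L2) ≤
        Module.finrank k (A ⟶ A⟦(1 : ℤ)⟧) := Submodule.finrank_le _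
    have hle1 : Module.finrank k (LinearMap.range L1) ≤
        Module.finrank k (A ⟶ B) := by
      rw [← hrn1]; omega
    have hkerz : Module.finrank k (LinearMap.ker L1) = 0 := by
      rw [hker] at hrn2
      omega
    have hinj : Function.Injective L1 := by
      rw [← LinearMap.ker_eq_bot]
      exact Submodule.finrank_eq_zero.mp hkerz
    have : L1 f = 0 := by
      simp only [hL1, Linear.rightComp_apply]
      exact comp_distTriang_mor_zero₁₂ _ hT
    simpa using hinj (by simpa using this)
  · intro hf
    -- rotate: the triangle (B, C, A⟦1⟧) has third map 0
    have hrot := rot_of_distTriang _ hT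
    obtain ⟨e, -, -⟩ := exists_iso_binaryBiproduct_of_distTriang _ hrot
      (by simp only [Triangle.rotate_mor₃, Triangle.mk_mor₁, hf]; exact neg_eq_zero.mpr (Functor.map_zero _ _ _))
    exact ⟨e.trans (biprod.braiding _ _)⟩
end

section
/- Let F : T → T' be an exact (triangulated) functor between triangulated categories, where T is Hom-finite over a field k. If F is essentially injective (i.e. F(A) ≅ F(B) in T' implies A ≅ B in T), then F is faithful. -/
open CategoryTheory Limits Pretriangulated

/-- An exact functor from a Hom-finite (over a field `k`) triangulated
category which is essentially injective is faithful. -/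
theorem stmt1 {k : Type*} [Field k] {T : Type*} [Category T] [Preadditive T]
    [CategoryTheory.Linear k T] [HasZeroObject T] [HasShift T ℤ]
    [∀ n : ℤ, (shiftFunctor T n).Additive] [Pretriangulated T]
    {T' : Type*} [Category T'] [Preadditive T'] [HasZeroObject T'] [HasShift T' ℤ]
    [∀ n : ℤ, (shiftFunctor T' n).Additive] [Pretriangulated T']
    (homFinite : ∀ X Y : T, FiniteDimensional k (X ⟶ Y))
    (F : T ⥤ T') [F.CommShift ℤ] [F.IsTriangulated]
    (hinj : ∀ A B : T, Nonempty (F.obj A ≅ F.obj B) → Nonempty (A ≅ B)) :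
    F.Faithful := by
  haveI : ∀ X Y : T, FiniteDimensional k (X ⟶ Y) := homFinite
  have key : ∀ (A B : T) (f : A ⟶ B), F.map f = 0 → f = 0 := by
    intro A B f hf
    obtain ⟨Z, g, h, mem⟩ := distinguished_cocone_triangle f
    obtain ⟨Z₀, g₀, h₀, mem₀⟩ := distinguished_cocone_triangle (0 : A ⟶ B)
    have memF := F.map_distinguished _ mem
    have memF₀ := F.map_distinguished _ mem₀
    have e' := isoTriangleOfIso₁₂ _ _ memF memF₀ (Iso.refl _) (Iso.refl _) (by
      change F.map f ≫ 𝟙 _ = 𝟙 _ ≫ F.map 0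
      rw [hf, F.map_zero, zero_comp, comp_zero])
    obtain ⟨eZ⟩ := hinj Z Z₀ ⟨Triangle.π₃.mapIso e'⟩
    obtain ⟨e₀, -, -⟩ := exists_iso_binaryBiproduct_of_distTriang _
      (rot_of_distTriang _ mem₀) (by change -((0 : A ⟶ B)⟦(1 : ℤ)⟧') = 0; rw [Functor.map_zero, neg_zero])
    have eZ' : Z ≅ B ⊞ A⟦(1 : ℤ)⟧ := eZ ≪≫ e₀
    -- linear maps given by composition in the long exact sequence
    let a : (A ⟶ A) →ₗ[k] (A ⟶ B) := Linear.rightComp k A f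
    let b : (A ⟶ B) →ₗ[k] (A ⟶ Z) := Linear.rightComp k A g
    let c : (A ⟶ Z) →ₗ[k] (A ⟶ A⟦(1 : ℤ)⟧) := Linear.rightComp k A h
    let d : (A ⟶ A⟦(1 : ℤ)⟧) →ₗ[k] (A ⟶ B⟦(1 : ℤ)⟧) :=
      Linear.rightComp k A (f⟦(1 : ℤ)⟧')
    have hba : LinearMap.ker b = LinearMap.range a := by
      ext φ
      constructor
      · intro hφ
        obtain ⟨ψ, hψ⟩ := Triangle.coyoneda_exact₂ _ mem φ hφ
        exact ⟨ψ, hψ.symm⟩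
      · rintro ⟨ψ, rfl⟩
        show (ψ ≫ f) ≫ g = 0
        have := comp_distTriang_mor_zero₁₂ _ mem
        change f ≫ g = 0 at this
        rw [Category.assoc, this, comp_zero]
    have hcb : LinearMap.ker c = LinearMap.range b := by
      ext φ
      constructor
      · intro hφ
        obtain ⟨ψ, hψ⟩ := Triangle.coyoneda_exact₃ _ mem φ hφ
        exact ⟨ψ, hψ.symm⟩
      · rintro ⟨ψ, rfl⟩
        show (ψ ≫ g) ≫ h = 0
        have := comp_distTriang_mor_zero₂₃ _ mem
        change g ≫ h = 0 at this
        rw [Category.assoc, this, comp_zero]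
    have hdc : LinearMap.ker d = LinearMap.range c := by
      ext φ
      constructor
      · intro hφ
        obtain ⟨ψ, hψ⟩ := Triangle.coyoneda_exact₁ _ mem φ hφ
        exact ⟨ψ, hψ.symm⟩
      · rintro ⟨ψ, rfl⟩
        show (ψ ≫ h) ≫ (f⟦(1 : ℤ)⟧') = 0
        have := comp_distTriang_mor_zero₃₁ _ mem
        change h ≫ (f⟦(1 : ℤ)⟧') = 0 at this
        rw [Category.assoc, this, comp_zero]
    -- dimension count
    let eq1 : (A ⟶ Z) ≃ₗ[k] (A ⟶ B ⊞ A⟦(1 : ℤ)⟧) := Linear.homCongr k (Iso.refl A) eZ'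
    let eq2 : (A ⟶ B ⊞ A⟦(1 : ℤ)⟧) ≃ₗ[k] (A ⟶ B) × (A ⟶ A⟦(1 : ℤ)⟧) :=
      { toFun := fun φ => (φ ≫ biprod.fst, φ ≫ biprod.snd)
        map_add' := by intros; simp [Preadditive.add_comp]
        map_smul' := by intros; simp [Linear.smul_comp]
        invFun := fun p => biprod.lift p.1 p.2
        left_inv := fun φ => by apply biprod.hom_ext <;> simp
        right_inv := fun p => by simp }
    have h3 : Module.finrank k (A ⟶ Z) =
        Module.finrank k (A ⟶ B) + Module.finrank k (A ⟶ A⟦(1 : ℤ)⟧) := by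
      rw [(eq1.trans eq2).finrank_eq, Module.finrank_prod]
    have rb := LinearMap.finrank_range_add_finrank_ker b
    have rc := LinearMap.finrank_range_add_finrank_ker c
    have rd := LinearMap.finrank_range_add_finrank_ker d
    rw [hba] at rb
    rw [hcb] at rc
    rw [hdc] at rd
    rw [h3] at rc
    have hra : Module.finrank k (LinearMap.range a) = 0 := by omega
    have hbot : LinearMap.range a = ⊥ := Submodule.finrank_eq_zero.mp hra
    have hfa : f ∈ LinearMap.range a := ⟨𝟙 A, by simp [a]⟩
    rw [hbot] at hfa
    simpa using hfa
  refine ⟨fun {X Y} {f g} hfg => ?_⟩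
  have h0 : F.map (f - g) = 0 := by rw [F.map_sub, hfg, sub_self]
  have := key _ _ _ h0
  rwa [sub_eq_zero] at this
end

section
/- Let F : T → T' be an exact functor between triangulated categories admitting a right adjoint G : T' → T. Then G is also an exact functor. -/
open CategoryTheory Category Limits Pretriangulated

namespace Stmt2Aux

variable {C D : Type*} [Category C] [Category D] [HasShift C ℤ] [HasShift D ℤ]
  {F : C ⥤ D} {G : D ⥤ C} (adj : F ⊣ G) [F.CommShift ℤ]

/-- The candidate inverse component of the commutation isomorphism for `G`. -/
noncomputable def v (n : ℤ) (X : D) : (G.obj X)⟦n⟧ ⟶ G.obj (X⟦n⟧) :=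
  adj.homEquiv _ _ ((F.commShiftIso n).hom.app (G.obj X) ≫ (adj.counit.app X)⟦n⟧')

lemma v_spec (n : ℤ) (X : D) :
    F.map (v adj n X) ≫ adj.counit.app (X⟦n⟧) =
      (F.commShiftIso n).hom.app (G.obj X) ≫ (adj.counit.app X)⟦n⟧' := by
  have h := adj.homEquiv_counit (X := (G.obj X)⟦n⟧) (Y := X⟦n⟧) (g := v adj n X)
  rw [← h, v, Equiv.symm_apply_apply]

lemma hom_ext_adj {W : C} {X : D} {u₁ u₂ : W ⟶ G.obj X}
    (h : F.map u₁ ≫ adj.counit.app X = F.map u₂ ≫ adj.counit.app X) : u₁ = u₂ := by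
  apply (adj.homEquiv _ _).symm.injective
  rw [Adjunction.homEquiv_counit, Adjunction.homEquiv_counit, h]

lemma counit_nat {X Y : D} (f : X ⟶ Y) :
    F.map (G.map f) ≫ adj.counit.app Y = adj.counit.app X ≫ f :=
  adj.counit_naturality f

/-- First composite adjunction. -/
noncomputable def adjA (n : ℤ) : (F ⋙ shiftFunctor D (-n)) ⊣ (shiftFunctor D n ⋙ G) :=
  adj.comp (shiftEquiv D n).symm.toAdjunction

/-- Second composite adjunction. -/
noncomputable def adjB (n : ℤ) : (shiftFunctor C (-n) ⋙ F) ⊣ (G ⋙ shiftFunctor C n) :=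
  ((shiftEquiv C n).symm.toAdjunction).comp adj

lemma shiftEquiv_symm_counit (E : Type*) [Category E] [HasShift E ℤ] (n : ℤ) :
    (shiftEquiv E n).symm.counit =
      (shiftFunctorCompIsoId E n (-n) (add_neg_cancel n)).hom := rfl

lemma adjA_counit_app (n : ℤ) (X : D) :
    (adjA adj n).counit.app X = (adj.counit.app (X⟦n⟧))⟦-n⟧' ≫
      (shiftFunctorCompIsoId D n (-n) (add_neg_cancel n)).hom.app X := by
  erw [adjA, Adjunction.comp_counit_app]
  rfl

lemma adjB_counit_app (n : ℤ) (X : D) :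
    (adjB adj n).counit.app X =
      F.map ((shiftFunctorCompIsoId C n (-n) (add_neg_cancel n)).hom.app (G.obj X)) ≫
        adj.counit.app X := by
  rw [adjB, Adjunction.comp_counit_app]
  rfl

/-- The commutation isomorphism of the right adjoint with the shift. -/
noncomputable def e (n : ℤ) : shiftFunctor D n ⋙ G ≅ G ⋙ shiftFunctor C n :=
  (conjugateIsoEquiv (adjB adj n) (adjA adj n) (F.commShiftIso (-n)).symm).symm

lemma ext' (n : ℤ) {X : D} {u₁ u₂ : (G.obj X)⟦n⟧ ⟶ G.obj (X⟦n⟧)}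
    (h : (F.map u₁)⟦-n⟧' ≫ (adjA adj n).counit.app X
        = (F.map u₂)⟦-n⟧' ≫ (adjA adj n).counit.app X) : u₁ = u₂ := by
  apply ((adjA adj n).homEquiv _ X).symm.injective
  rw [Adjunction.homEquiv_counit, Adjunction.homEquiv_counit]
  exact h

lemma e_inv_app (n : ℤ) (X : D) : (e adj n).inv.app X = v adj n X := by
  refine ext' adj n ?_
  have h1 := conjugateEquiv_counit (adjB adj n) (adjA adj n) (F.commShiftIso (-n)).symm.hom X
  have h2 : (e adj n).inv.app X =
      (conjugateEquiv (adjB adj n) (adjA adj n) (F.commShiftIso (-n)).symm.hom).app X := rfl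
  rw [h2]
  have lhs : (F ⋙ shiftFunctor D (-n)).map
      ((conjugateEquiv (adjB adj n) (adjA adj n) (F.commShiftIso (-n)).symm.hom).app X) ≫
      (adjA adj n).counit.app X =
      (F.commShiftIso (-n)).symm.hom.app ((G ⋙ shiftFunctor C n).obj X) ≫
        (adjB adj n).counit.app X := h1
  rw [show ((F ⋙ shiftFunctor D (-n)).map
      ((conjugateEquiv (adjB adj n) (adjA adj n) (F.commShiftIso (-n)).symm.hom).app X))
      = (F.map ((conjugateEquiv (adjB adj n) (adjA adj n)
          (F.commShiftIso (-n)).symm.hom).app X))⟦-n⟧' from rfl] at lhs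
  rw [lhs]
  -- now compute both sides explicitly
  rw [adjA_counit_app, adjB_counit_app]
  rw [← Functor.map_comp_assoc, v_spec]
  rw [Functor.map_shiftFunctorCompIsoId_hom_app]
  have nat := (shiftFunctorCompIsoId D n (-n) (add_neg_cancel n)).hom.naturality
    (adj.counit.app X)
  dsimp at nat
  simp only [Iso.symm_hom, Functor.comp_obj, Functor.map_comp, Category.assoc,
    Iso.inv_hom_id_app_assoc, nat]

lemma v_zero (X : D) : v adj (0 : ℤ) X = (Functor.CommShift.isoZero G ℤ).inv.app X := by
  apply hom_ext_adj adj
  rw [v_spec, F.commShiftIso_zero]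
  have nat := (shiftFunctorZero D ℤ).inv.naturality (adj.counit.app X)
  dsimp at nat
  simp [Functor.CommShift.isoZero_hom_app, Functor.CommShift.isoZero_inv_app, ← nat]

lemma v_add (m n : ℤ) (X : D) :
    v adj (m + n) X = (shiftFunctorAdd C m n).hom.app (G.obj X) ≫
      (shiftFunctor C n).map (v adj m X) ≫ v adj n (X⟦m⟧) ≫
        G.map ((shiftFunctorAdd D m n).inv.app X) := by
  apply hom_ext_adj adj
  rw [v_spec, F.commShiftIso_add]
  have nat := (shiftFunctorAdd D m n).inv.naturality (adj.counit.app X)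
  dsimp at nat
  simp only [Functor.map_comp, Category.assoc, Functor.CommShift.isoAdd_hom_app,
    counit_nat adj]
  rw [← nat]
  rw [reassoc_of% (v_spec adj n (X⟦m⟧))]
  rw [Functor.commShiftIso_hom_naturality_assoc]
  conv_rhs => rw [← Functor.map_comp_assoc (shiftFunctor D n), v_spec]
  simp

/-- The `CommShift` structure on the right adjoint. -/
noncomputable def gCommShift : G.CommShift ℤ where
  commShiftIso n := e adj n
  commShiftIso_zero := by
    have hinv : (e adj (0 : ℤ)).inv = (Functor.CommShift.isoZero G ℤ).inv := by
      ext X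
      rw [e_inv_app, v_zero]
    exact Iso.ext ((Iso.inv_eq_inv _ _).mp hinv)
  commShiftIso_add m n := by
    have hinv : (e adj (m + n)).inv = (Functor.CommShift.isoAdd (e adj m) (e adj n)).inv := by
      ext X
      rw [e_inv_app, v_add, Functor.CommShift.isoAdd_inv_app, e_inv_app, e_inv_app]
    exact Iso.ext ((Iso.inv_eq_inv _ _).mp hinv)

section Triangulated

variable [HasZeroObject C] [HasZeroObject D] [Preadditive C] [Preadditive D]
  [∀ n : ℤ, (shiftFunctor C n).Additive] [∀ n : ℤ, (shiftFunctor D n).Additive]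
  [Pretriangulated C] [Pretriangulated D] [F.IsTriangulated]

include adj in
lemma G_map_zero (X Y : D) : G.map (0 : X ⟶ Y) = 0 := by
  apply hom_ext_adj adj
  rw [counit_nat adj]
  simp

lemma gCommShift_iso (n : ℤ) : letI := gCommShift adj; G.commShiftIso n = e adj n := rfl

lemma gIsTriangulated :
    letI := gCommShift adj
    G.IsTriangulated := by
  letI := gCommShift adj
  constructor
  intro T hT
  obtain ⟨Z, g', h', hH⟩ := Pretriangulated.distinguished_cocone_triangle (G.map T.mor₁)
  set H := Triangle.mk (G.map T.mor₁) g' h' with hHdef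
  have hFH : F.mapTriangle.obj H ∈ distTriang D := F.map_distinguished H hH
  obtain ⟨c, hc₂, hc₃⟩ := Pretriangulated.complete_distinguished_triangle_morphism
    (F.mapTriangle.obj H) T hFH hT (adj.counit.app T.obj₁) (adj.counit.app T.obj₂)
    (by dsimp [H]; exact counit_nat adj _)
  set c' : Z ⟶ G.obj T.obj₃ := adj.homEquiv Z T.obj₃ c with hc'def
  have hc'c : F.map c' ≫ adj.counit.app T.obj₃ = c := by
    have h := adj.homEquiv_counit (X := Z) (Y := T.obj₃) (g := c')
    rw [← h, hc'def]
    exact Equiv.symm_apply_apply _ _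
  have comm₂ : H.mor₂ ≫ c' = G.map T.mor₂ := by
    apply hom_ext_adj adj
    erw [Functor.map_comp, Category.assoc, hc'c, counit_nat adj]
    exact hc₂
  have hkey : c' ≫ G.map T.mor₃ = h' ≫ (e adj 1).inv.app T.obj₁ := by
    apply hom_ext_adj adj
    rw [Functor.map_comp, Category.assoc, counit_nat adj,
      ← Category.assoc, hc'c]
    rw [Functor.map_comp, Category.assoc, e_inv_app, v_spec]
    have := hc₃
    dsimp [H] at this
    exact this.symm.trans (Category.assoc _ _ _)
  have hmor₃ : c' ≫ G.map T.mor₃ ≫ (e adj 1).hom.app T.obj₁ = h' := by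
    rw [← Category.assoc, hkey, Category.assoc, Iso.inv_hom_id_app]
    exact Category.comp_id h'
  have hiso : IsIso c' := by
    refine isIso_of_yoneda_map_bijective c' (fun W => ⟨?_, ?_⟩)
    · intro u₁ u₂ h12
      have hu : (u₁ - u₂) ≫ c' = 0 := by
        rw [Preadditive.sub_comp, show u₁ ≫ c' = u₂ ≫ c' from h12, sub_self]
      have h1 : (u₁ - u₂) ≫ H.mor₃ = 0 := by
        show (u₁ - u₂) ≫ h' = 0
        rw [← hmor₃, ← Category.assoc, hu, zero_comp]
      obtain ⟨w, hw⟩ := Triangle.coyoneda_exact₃ H hH (u₁ - u₂) h1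
      have h2 : w ≫ G.map T.mor₂ = 0 := by
        erw [← comm₂, ← Category.assoc, ← hw, hu]
      have h3 : ((adj.homEquiv _ _).symm w) ≫ T.mor₂ = 0 := by
        erw [← Adjunction.homEquiv_naturality_right_symm, h2]
        simp [Adjunction.homEquiv_counit]
      obtain ⟨t, ht⟩ := Triangle.coyoneda_exact₂ T hT _ h3
      have hw2 : w = (adj.homEquiv _ _ t) ≫ H.mor₁ := by
        conv_lhs => rw [← Equiv.apply_symm_apply (adj.homEquiv _ _) w, ht,
          Adjunction.homEquiv_naturality_right]
        rfl
      have hzero : u₁ - u₂ = 0 := by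
        erw [hw, hw2, Category.assoc, comp_distTriang_mor_zero₁₂ H hH, comp_zero]
        rfl
      exact sub_eq_zero.mp hzero
    · intro p
      set p' := (adj.homEquiv _ _).symm p with hp'def
      set q : W ⟶ (G.obj T.obj₁)⟦(1:ℤ)⟧ :=
        (adj.homEquiv _ _ (p' ≫ T.mor₃)) ≫ (e adj 1).hom.app T.obj₁ with hqdef
      have hq : q ≫ (H.mor₁)⟦1⟧' = 0 := by
        show q ≫ (G.map T.mor₁)⟦1⟧' = 0
        have nat := (e adj 1).hom.naturality T.mor₁
        dsimp at nat
        rw [hqdef, Category.assoc, ← nat, ← Category.assoc,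
          ← Adjunction.homEquiv_naturality_right, Category.assoc,
          comp_distTriang_mor_zero₃₁ T hT, comp_zero, Adjunction.homEquiv_unit,
          G_map_zero adj, comp_zero, zero_comp]
      obtain ⟨r, hr⟩ := Triangle.coyoneda_exact₁ H hH q hq
      have hp2 : p ≫ G.map T.mor₃ = adj.homEquiv _ _ (p' ≫ T.mor₃) := by
        rw [Adjunction.homEquiv_naturality_right, hp'def, Equiv.apply_symm_apply]
      have hs : (r ≫ c' - p) ≫ G.map T.mor₃ = 0 := by
        have h0 : (r ≫ c' - p) ≫ (G.map T.mor₃ ≫ (e adj 1).hom.app T.obj₁) = 0 := by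
          erw [Preadditive.sub_comp, Category.assoc, hmor₃, ← Category.assoc, hp2, ← hqdef, hr]
          exact sub_self _
        rw [← cancel_mono ((e adj 1).hom.app T.obj₁), Category.assoc, zero_comp]
        exact h0
      have h3 : ((adj.homEquiv _ _).symm (r ≫ c' - p)) ≫ T.mor₃ = 0 := by
        rw [← Adjunction.homEquiv_naturality_right_symm, hs]
        simp [Adjunction.homEquiv_counit]
      obtain ⟨t, ht⟩ := Triangle.coyoneda_exact₃ T hT _ h3
      refine ⟨r - (adj.homEquiv _ _ t) ≫ H.mor₂, ?_⟩
      have hs2 : r ≫ c' - p = ((adj.homEquiv _ _ t) ≫ H.mor₂) ≫ c' := by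
        erw [Category.assoc, comm₂, ← Adjunction.homEquiv_naturality_right, ← ht,
          Equiv.apply_symm_apply]
      show (r - (adj.homEquiv _ _) t ≫ H.mor₂) ≫ c' = p
      erw [Preadditive.sub_comp, ← hs2, sub_sub_cancel]
  letI := hiso
  let ψ : H ⟶ G.mapTriangle.obj T :=
    { hom₁ := 𝟙 _
      hom₂ := 𝟙 _
      hom₃ := c'
      comm₁ := by dsimp [H]; exact (Category.comp_id _).trans (Category.id_comp _).symm
      comm₂ := by dsimp [H] at comm₂ ⊢; exact comm₂.trans (Category.id_comp _).symm
      comm₃ := by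
        dsimp [H, Functor.mapTriangle]
        rw [show G.commShiftIso (1:ℤ) = e adj 1 from rfl]
        erw [CategoryTheory.Functor.map_id, Category.comp_id]
        exact hmor₃.symm }
  have : IsIso ψ := Triangle.isIso_of_isIsos ψ (by dsimp [ψ]; exact IsIso.id _) (by dsimp [ψ]; exact IsIso.id _) hiso
  exact isomorphic_distinguished H hH _ (asIso ψ).symm

end Triangulated

end Stmt2Aux

open CategoryTheory Limits Pretriangulated

/-- A right adjoint of an exact functor between triangulated categories
is itself exact: it carries a commutation-with-shift structure making it triangulated. -/
theorem stmt2 {T : Type*} [Category T] [Preadditive T] [HasZeroObject T] [HasShift T ℤ]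
    [∀ n : ℤ, (shiftFunctor T n).Additive] [Pretriangulated T]
    {T' : Type*} [Category T'] [Preadditive T'] [HasZeroObject T'] [HasShift T' ℤ]
    [∀ n : ℤ, (shiftFunctor T' n).Additive] [Pretriangulated T']
    (F : T ⥤ T') [F.CommShift ℤ] [F.IsTriangulated]
    (G : T' ⥤ T) (adj : F ⊣ G) :
    ∃ c : G.CommShift ℤ, letI := c; G.IsTriangulated := by
  exact ⟨Stmt2Aux.gCommShift adj, Stmt2Aux.gIsTriangulated adj⟩
end
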